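/- On ℝ⁴ ∖ {0} identified with ℂ² via the hyperkähler triple (J₁,J₂,J₃), the function ψ = 1/r² satisfies dd^{C}ψ = (4/r⁴)(dr ∧ J₁dr − J₂dr ∧ J₃dr), where d^C is taken with respect to J₁ and Jᵢdr is the 1-form dr composed with Jᵢ. Moreover this 2-form is anti-self-dual for the standard metric and orientation. -/

import Mathlib

noncomputable section

open Finset

abbrev E4 := EuclideanSpace ℝ (Fin 4)

/-- Component matrices of the standard self-dual 2-forms
`ω₁ = dx¹∧dx² + dx³∧dx⁴`, `ω₂ = dx¹∧dx³ − dx²∧dx⁴`, `ω₃ = dx¹∧dx⁴ + dx²∧dx³`. -/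
def sdBasis : Fin 3 → Matrix (Fin 4) (Fin 4) ℝ :=
  ![!![0,1,0,0; -1,0,0,0; 0,0,0,1; 0,0,-1,0],
    !![0,0,1,0; 0,0,0,-1; -1,0,0,0; 0,1,0,0],
    !![0,0,0,1; 0,0,1,0; 0,-1,0,0; -1,0,0,0]]

/-- The vector `Jᵢ e_k`: `(Jᵢ e_k)_a = (sdBasis i) k a`. -/
def Je (i : Fin 3) (k : Fin 4) : E4 :=
  ∑ a : Fin 4, sdBasis i k a • EuclideanSpace.single a (1 : ℝ)

/-- Components of `dr`. -/
def dr (a : Fin 4) (x : E4) : ℝ :=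
  fderiv ℝ (fun y : E4 => ‖y‖) x (EuclideanSpace.single a 1)

/-- Components of the 1-form `Jᵢ dr`: `(Jᵢ dr)(X) = −dr(JᵢX)`. -/
def Jdr (i : Fin 3) (b : Fin 4) (x : E4) : ℝ :=
  -(fderiv ℝ (fun y : E4 => ‖y‖) x (Je i b))

/-- The potential `ψ = 1/r²`. -/
def psi (x : E4) : ℝ := (‖x‖ ^ 2)⁻¹

/-- Components of `d^C ψ` with respect to `J₁`: `d^Cψ(X) = −dψ(J₁X)`. -/
def dCpsi (b : Fin 4) (x : E4) : ℝ := -(fderiv ℝ psi x (Je 0 b))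

/-- Components of `dd^C ψ`. -/
def ddC (a b : Fin 4) (x : E4) : ℝ :=
  fderiv ℝ (dCpsi b) x (EuclideanSpace.single a 1)
    - fderiv ℝ (dCpsi a) x (EuclideanSpace.single b 1)

/-- `Sf i b x = ∑ c, (sdBasis i) b c * x c = ⟪x, Je i b⟫`. -/
def Sf (i : Fin 3) (b : Fin 4) (x : E4) : ℝ := ∑ c : Fin 4, sdBasis i b c * x c

lemma Je_apply (i : Fin 3) (k : Fin 4) (c : Fin 4) : Je i k c = sdBasis i k c := by
  simp only [Je, Fin.sum_univ_four]
  fin_cases c <;> simp [EuclideanSpace.single_apply]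

lemma inner_E4 (u v : E4) : (inner ℝ u v : ℝ) = ∑ c : Fin 4, u c * v c := by
  simp [PiLp.inner_apply, RCLike.inner_apply, mul_comm]

lemma inner_Je (x : E4) (i : Fin 3) (b : Fin 4) : (inner ℝ x (Je i b) : ℝ) = Sf i b x := by
  rw [inner_E4, Sf]
  exact Finset.sum_congr rfl fun c _ => by rw [Je_apply]; ring

lemma inner_single (x : E4) (a : Fin 4) :
    (inner ℝ x (EuclideanSpace.single a (1:ℝ)) : ℝ) = x a := by
  rw [inner_E4]
  simp [EuclideanSpace.single_apply, Finset.sum_ite_eq]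

lemma norm_sq_E4 (y : E4) : ‖y‖^2 = ∑ c : Fin 4, y c ^ 2 := by
  rw [← real_inner_self_eq_norm_sq, inner_E4]; simp [sq]

lemma hasFDerivAt_normsq (x : E4) :
    HasFDerivAt (fun y : E4 => ‖y‖^2) (2 • innerSL ℝ x) x := by
  simpa using (hasFDerivAt_id x).norm_sq

lemma hasFDerivAt_norm4 (x : E4) (hx : x ≠ 0) :
    HasFDerivAt (fun y : E4 => ‖y‖) (‖x‖⁻¹ • innerSL ℝ x) x := by
  have hn : ‖x‖ ≠ 0 := norm_ne_zero_iff.mpr hx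
  have h2 : HasDerivAt Real.sqrt (1/(2 * Real.sqrt (‖x‖^2))) (‖x‖^2) :=
    Real.hasDerivAt_sqrt (by positivity)
  have h3 := h2.comp_hasFDerivAt x (hasFDerivAt_normsq x)
  have he : (fun y : E4 => Real.sqrt (‖y‖^2)) = fun y : E4 => ‖y‖ := by
    funext y; rw [Real.sqrt_sq (norm_nonneg y)]
  rw [show Real.sqrt ∘ (fun y : E4 => ‖y‖^2) = fun y : E4 => ‖y‖ from he] at h3
  refine h3.congr_fderiv ?_
  rw [Real.sqrt_sq (norm_nonneg x)]
  ext v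
  simp [smul_smul]
  field_simp

lemma dr_eq (a : Fin 4) (x : E4) (hx : x ≠ 0) : dr a x = x a / ‖x‖ := by
  rw [dr, (hasFDerivAt_norm4 x hx).fderiv]
  simp [inner_single]
  ring

lemma Jdr_eq (i : Fin 3) (b : Fin 4) (x : E4) (hx : x ≠ 0) :
    Jdr i b x = -(Sf i b x / ‖x‖) := by
  rw [Jdr, (hasFDerivAt_norm4 x hx).fderiv]
  have h : (innerSL ℝ x) (Je i b) = Sf i b x := inner_Je x i b
  simp only [ContinuousLinearMap.smul_apply, smul_eq_mul, h]
  ring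

lemma hasFDerivAt_psi (x : E4) (hx : x ≠ 0) :
    HasFDerivAt psi ((-((‖x‖^2)^2)⁻¹ * 2) • innerSL ℝ x) x := by
  have := (hasDerivAt_inv (pow_ne_zero 2 (norm_ne_zero_iff.mpr hx))).comp_hasFDerivAt x
    (hasFDerivAt_normsq x)
  have he : ((fun t : ℝ => t⁻¹) ∘ fun y : E4 => ‖y‖^2) = psi := rfl
  rw [he] at this
  refine this.congr_fderiv ?_
  ext v; simp [smul_smul]; ring

lemma dCpsi_eq (b : Fin 4) (y : E4) (hy : y ≠ 0) :
    dCpsi b y = 2 * (inner ℝ y (Je 0 b) : ℝ) * (((‖y‖^2)^2)⁻¹) := by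
  rw [dCpsi, (hasFDerivAt_psi y hy).fderiv]
  simp
  ring

lemma hasFDerivAt_dCpsi (b : Fin 4) (x : E4) (hx : x ≠ 0) :
    HasFDerivAt (dCpsi b)
      ((2 * (inner ℝ x (Je 0 b) : ℝ)) • ((-(2*‖x‖^2)/(((‖x‖^2)^2)^2)) • (2 • innerSL ℝ x))
        + (((‖x‖^2)^2)⁻¹) • (2 • innerSL ℝ (Je 0 b))) x := by
  have hu : HasFDerivAt (fun y : E4 => 2 * (inner ℝ y (Je 0 b) : ℝ))
      (2 • innerSL ℝ (Je 0 b)) x := by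
    have he : (fun y : E4 => 2 * (inner ℝ y (Je 0 b):ℝ))
        = fun y : E4 => 2 * innerSL ℝ (Je 0 b) y := by
      funext y; rw [innerSL_apply_apply, real_inner_comm]
    rw [he]
    simpa [two_smul] using ((innerSL ℝ (Je 0 b)).hasFDerivAt (x := x)).const_mul (2:ℝ)
  have hd : HasDerivAt (fun t : ℝ => (t^2)⁻¹) (-(2*‖x‖^2)/(((‖x‖^2)^2)^2)) (‖x‖^2) := by
    have := (hasDerivAt_pow 2 (‖x‖^2)).inv (pow_ne_zero 2 (pow_ne_zero 2 (norm_ne_zero_iff.mpr hx)))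
    simp at this; exact this
  have hv : HasFDerivAt (fun y : E4 => ((‖y‖^2)^2)⁻¹)
      ((-(2*‖x‖^2)/(((‖x‖^2)^2)^2)) • (2 • innerSL ℝ x)) x :=
    by have := hd.comp_hasFDerivAt x (hasFDerivAt_normsq x); exact this
  have hg := hu.mul hv
  refine hg.congr_of_eventuallyEq ?_
  filter_upwards [IsOpen.mem_nhds isOpen_compl_singleton hx] with y hy
  exact dCpsi_eq b y hy

lemma fderiv_dCpsi (b a : Fin 4) (x : E4) (hx : x ≠ 0) :
    fderiv ℝ (dCpsi b) x (EuclideanSpace.single a 1)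
      = 2 * sdBasis 0 b a / ‖x‖^4 - 8 * Sf 0 b x * x a / ‖x‖^6 := by
  rw [(hasFDerivAt_dCpsi b x hx).fderiv]
  have h1 : (innerSL ℝ x) (EuclideanSpace.single a 1) = x a := inner_single x a
  have h2 : (innerSL ℝ (Je 0 b)) (EuclideanSpace.single a 1) = sdBasis 0 b a := by
    rw [innerSL_apply_apply, inner_single, Je_apply]
  have h3 : (inner ℝ x (Je 0 b) : ℝ) = Sf 0 b x := inner_Je x 0 b
  simp only [ContinuousLinearMap.add_apply, ContinuousLinearMap.smul_apply, smul_eq_mul,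
    h1, h2, h3]
  have hn : ‖x‖ ≠ 0 := norm_ne_zero_iff.mpr hx
  field_simp
  ring

lemma ddC_eq (a b : Fin 4) (x : E4) (hx : x ≠ 0) :
    ddC a b x = (2 * sdBasis 0 b a - 2 * sdBasis 0 a b) / ‖x‖^4
      - (8 * Sf 0 b x * x a - 8 * Sf 0 a x * x b) / ‖x‖^6 := by
  rw [ddC, fderiv_dCpsi b a x hx, fderiv_dCpsi a b x hx]
  ring

lemma drJdr (a : Fin 4) (i : Fin 3) (b : Fin 4) (x : E4) (hx : x ≠ 0) :
    dr a x * Jdr i b x = -(x a * Sf i b x) / ‖x‖^2 := by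
  have hn : ‖x‖ ≠ 0 := norm_ne_zero_iff.mpr hx
  rw [dr_eq a x hx, Jdr_eq i b x hx]
  rw [mul_neg, div_mul_div_comm, ← sq, ← neg_div, neg_mul_eq_mul_neg]

lemma JdrJdr (i : Fin 3) (a : Fin 4) (j : Fin 3) (b : Fin 4) (x : E4) (hx : x ≠ 0) :
    Jdr i a x * Jdr j b x = Sf i a x * Sf j b x / ‖x‖^2 := by
  rw [Jdr_eq i a x hx, Jdr_eq j b x hx]
  rw [neg_mul_neg, div_mul_div_comm, ← sq]

lemma Sf_eval (x : E4) :
    (Sf 0 0 x = x 1 ∧ Sf 0 1 x = -x 0 ∧ Sf 0 2 x = x 3 ∧ Sf 0 3 x = -x 2) ∧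
    (Sf 1 0 x = x 2 ∧ Sf 1 1 x = -x 3 ∧ Sf 1 2 x = -x 0 ∧ Sf 1 3 x = x 1) ∧
    (Sf 2 0 x = x 3 ∧ Sf 2 1 x = x 2 ∧ Sf 2 2 x = -x 1 ∧ Sf 2 3 x = -x 0) := by
  refine ⟨⟨?_, ?_, ?_, ?_⟩, ⟨?_, ?_, ?_, ?_⟩, ⟨?_, ?_, ?_, ?_⟩⟩ <;>
    simp [Sf, sdBasis, Fin.sum_univ_four]

lemma key1 (a b : Fin 4) : sdBasis 0 b a = - sdBasis 0 a b := by
  fin_cases a <;> fin_cases b <;> norm_num [sdBasis]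

lemma key2 (a b : Fin 4) (x : E4) :
    sdBasis 0 a b * (x 0^2 + x 1^2 + x 2^2 + x 3^2)
      + (Sf 0 b x * x a - Sf 0 a x * x b)
      = Sf 1 a x * Sf 2 b x - Sf 1 b x * Sf 2 a x := by
  obtain ⟨⟨e00, e01, e02, e03⟩, ⟨e10, e11, e12, e13⟩, ⟨e20, e21, e22, e23⟩⟩ := Sf_eval x
  fin_cases a <;> fin_cases b <;>
    simp only [Fin.reduceFinMk, Fin.mk_zero, Fin.mk_one, Fin.isValue,
      e00, e01, e02, e03, e10, e11, e12, e13, e20, e21, e22, e23] <;>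
    norm_num [sdBasis, Matrix.vecHead, Matrix.vecTail, Matrix.cons_val_zero, Matrix.cons_val_one, Matrix.cons_val_two, Matrix.cons_val_three] <;> ring

lemma frac_identity (Q M Sa Sb xa xb S1a S1b S2a S2b : ℝ) (hQ0 : Q ≠ 0)
    (h : M * Q + (Sb * xa - Sa * xb) = S1a * S2b - S1b * S2a) :
    (2 * -M - 2 * M)/Q^2 - (8*Sb*xa - 8*Sa*xb)/Q^3
      = (4/Q^2) * ((-(xa*Sb)/Q - -(xb*Sa)/Q) - (S1a*S2b/Q - S1b*S2a/Q)) := by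
  field_simp
  linear_combination (-4 : ℝ) * h

set_option maxHeartbeats 1000000 in
/-- on `ℝ⁴ ∖ {0}`, `ψ = 1/r²` satisfies
`dd^Cψ = (4/r⁴)(dr ∧ J₁dr − J₂dr ∧ J₃dr)`, and this 2-form is anti-self-dual
(pointwise orthogonal to the self-dual forms ω₁, ω₂, ω₃). -/
theorem stmt5 (x : E4) (hx : x ≠ 0) :
    (∀ a b : Fin 4,
      ddC a b x = (4 / ‖x‖ ^ 4) *
        ((dr a x * Jdr 0 b x - dr b x * Jdr 0 a x)
          - (Jdr 1 a x * Jdr 2 b x - Jdr 1 b x * Jdr 2 a x))) ∧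
    (∀ i : Fin 3, ∑ a : Fin 4, ∑ b : Fin 4, ddC a b x * sdBasis i a b = 0) := by
  have hn : ‖x‖ ≠ 0 := norm_ne_zero_iff.mpr hx
  have hQ : ‖x‖^2 = x 0^2 + x 1^2 + x 2^2 + x 3^2 := by
    rw [norm_sq_E4, Fin.sum_univ_four]
  have hQ0 : (x 0^2 + x 1^2 + x 2^2 + x 3^2 : ℝ) ≠ 0 := by
    rw [← hQ]; exact pow_ne_zero 2 hn
  have h4 : ‖x‖^4 = (x 0^2 + x 1^2 + x 2^2 + x 3^2)^2 := by
    rw [show ‖x‖^4 = (‖x‖^2)^2 by ring, hQ]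
  have h6 : ‖x‖^6 = (x 0^2 + x 1^2 + x 2^2 + x 3^2)^3 := by
    rw [show ‖x‖^6 = (‖x‖^2)^3 by ring, hQ]
  obtain ⟨⟨e00, e01, e02, e03⟩, ⟨e10, e11, e12, e13⟩, ⟨e20, e21, e22, e23⟩⟩ := Sf_eval x
  constructor
  · intro a b
    rw [ddC_eq a b x hx, drJdr a 0 b x hx, drJdr b 0 a x hx,
      JdrJdr 1 a 2 b x hx, JdrJdr 1 b 2 a x hx, h4, h6, hQ, key1 a b]
    exact frac_identity _ _ _ _ _ _ _ _ _ _ hQ0 (key2 a b x)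
  · intro i
    have H : ∀ a b, ddC a b x
        = (2 * sdBasis 0 b a - 2 * sdBasis 0 a b) / (x 0^2 + x 1^2 + x 2^2 + x 3^2)^2
          - (8 * Sf 0 b x * x a - 8 * Sf 0 a x * x b) / (x 0^2 + x 1^2 + x 2^2 + x 3^2)^3 := by
      intro a b
      rw [ddC_eq a b x hx, show ‖x‖^4 = (‖x‖^2)^2 by ring, show ‖x‖^6 = (‖x‖^2)^3 by ring, hQ]
    have T : ∀ A B N : ℝ, (A / (x 0^2 + x 1^2 + x 2^2 + x 3^2)^2
          - B / (x 0^2 + x 1^2 + x 2^2 + x 3^2)^3) * N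
        = (A * N * (x 0^2 + x 1^2 + x 2^2 + x 3^2) - B * N)
          / (x 0^2 + x 1^2 + x 2^2 + x 3^2)^3 := by
      intro A B N
      field_simp
    fin_cases i <;>
      · simp only [Fin.sum_univ_four, H, T, ← add_div]
        rw [div_eq_zero_iff]
        left
        simp only [e00, e01, e02, e03, e10, e11, e12, e13, e20, e21, e22, e23, Fin.isValue]
        norm_num [sdBasis, Matrix.vecHead, Matrix.vecTail, Matrix.cons_val_zero, Matrix.cons_val_one, Matrix.cons_val_two, Matrix.cons_val_three]
        ring
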